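/- Let c ≥ 1 and let d₁, …, d_c be positive integers. Define H(𝐝) = Σ_{∅ ≠ S ⊆ {1,…,c}} ((1+y)(1+z))^{|S|−1} · Π_{i∈S} H(dᵢ) in ℤ[[y,z]]. Then (1 − yz)·H(𝐝) has all coefficients nonnegative; equivalently, for all p, q ≥ 0 the coefficient of y^{p+1}z^{q+1} in H(𝐝) is at least the coefficient of y^p z^q in H(𝐝). (By Hirzebruch's formula, the coefficient of y^p z^q in H(𝐝) is the primitive Hodge number h^{p,q}_o of a smooth complete intersection of multidegree 𝐝 = (d₁,…,d_c) and dimension p+q in projective space, so this says h^{p+1,q+1}(𝐝) ≥ h^{p,q}(𝐝).) -/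

import Mathlib

open MvPowerSeries

/-- `Q_d = Σ_{i,j ≥ 1} C(d, i+j) yⁱzʲ` as a power series in `ℤ[[y,z]]`
(`y = X 0`, `z = X 1`). -/
def Q (d : ℕ) : MvPowerSeries (Fin 2) ℤ :=
  fun e => if 1 ≤ e 0 ∧ 1 ≤ e 1 then (d.choose (e 0 + e 1) : ℤ) else 0

/-- `P_d = Σ_{i,j ≥ 0} C(d-1, i+j+1) yⁱzʲ` as a power series in `ℤ[[y,z]]`. -/
def P (d : ℕ) : MvPowerSeries (Fin 2) ℤ :=
  fun e => ((d - 1).choose (e 0 + e 1 + 1) : ℤ)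

/-- `H(d) = P_d · (1 - Q_d)⁻¹` (`1 - Q_d` is a unit of `ℤ[[y,z]]`, and
`Ring.inverse` gives its inverse). -/
noncomputable def H (d : ℕ) : MvPowerSeries (Fin 2) ℤ := P d * Ring.inverse (1 - Q d)

/-- `H(𝐝) = Σ_{∅ ≠ S ⊆ {1,…,c}} ((1+y)(1+z))^{|S|-1} · Π_{i∈S} H(dᵢ)`, the
generating series of the primitive Hodge numbers of a complete intersection of
multidegree `𝐝 = (d₁,…,d_c)`. -/
noncomputable def Hmulti {c : ℕ} (ds : Fin c → ℕ) : MvPowerSeries (Fin 2) ℤ :=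
  ∑ S ∈ Finset.univ.powerset.erase (∅ : Finset (Fin c)),
    ((1 + X 0) * (1 + X 1)) ^ (S.card - 1) * ∏ i ∈ S, H (ds i)

/-- Nonnegativity of all coefficients. -/
def NN (F : MvPowerSeries (Fin 2) ℤ) : Prop := ∀ e, 0 ≤ coeff e F

lemma nn_add {F G : MvPowerSeries (Fin 2) ℤ} (hF : NN F) (hG : NN G) : NN (F + G) := by
  intro e; rw [map_add]; exact add_nonneg (hF e) (hG e)

lemma nn_mul {F G : MvPowerSeries (Fin 2) ℤ} (hF : NN F) (hG : NN G) : NN (F * G) := by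
  intro e
  rw [coeff_mul]
  exact Finset.sum_nonneg fun p _ => mul_nonneg (hF p.1) (hG p.2)

lemma nn_one : NN (1 : MvPowerSeries (Fin 2) ℤ) := by
  intro e; rw [coeff_one]; split <;> norm_num

lemma nn_X (i : Fin 2) : NN (X i : MvPowerSeries (Fin 2) ℤ) := by
  intro e; rw [MvPowerSeries.X, coeff_monomial]; split <;> norm_num

lemma nn_pow {F : MvPowerSeries (Fin 2) ℤ} (hF : NN F) (k : ℕ) : NN (F ^ k) := by
  induction k with
  | zero => simpa using nn_one
  | succ n ih => rw [pow_succ]; exact nn_mul ih hF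

lemma nn_sum {α : Type*} {s : Finset α} {f : α → MvPowerSeries (Fin 2) ℤ}
    (h : ∀ a ∈ s, NN (f a)) : NN (∑ a ∈ s, f a) := by
  intro e
  rw [map_sum]
  exact Finset.sum_nonneg fun a ha => h a ha e

lemma nn_prod {α : Type*} {s : Finset α} {f : α → MvPowerSeries (Fin 2) ℤ}
    (h : ∀ a ∈ s, NN (f a)) : NN (∏ a ∈ s, f a) := by
  classical
  induction s using Finset.induction_on with
  | empty => simpa using nn_one
  | insert _ _ hx ih =>
    rw [Finset.prod_insert hx]
    exact nn_mul (h _ (Finset.mem_insert_self _ _))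
      (ih fun a ha => h a (Finset.mem_insert_of_mem ha))

lemma coeff_Q (d : ℕ) (e : Fin 2 →₀ ℕ) :
    coeff e (Q d) = if 1 ≤ e 0 ∧ 1 ≤ e 1 then (d.choose (e 0 + e 1) : ℤ) else 0 := rfl

lemma coeff_P (d : ℕ) (e : Fin 2 →₀ ℕ) :
    coeff e (P d) = ((d - 1).choose (e 0 + e 1 + 1) : ℤ) := rfl

lemma nn_Q (d : ℕ) : NN (Q d) := by
  intro e; rw [coeff_Q]; split <;> positivity

lemma nn_P (d : ℕ) : NN (P d) := by
  intro e; rw [coeff_P]; positivity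

lemma unit_one_sub_Q (d : ℕ) : IsUnit (1 - Q d) := by
  rw [MvPowerSeries.isUnit_iff_constantCoeff, map_sub, map_one]
  have : constantCoeff (Q d) = 0 := by
    rw [← coeff_zero_eq_constantCoeff_apply, coeff_Q]
    simp
  rw [this]; simp

lemma one_sub_Q_mul_inv (d : ℕ) : (1 - Q d) * Ring.inverse (1 - Q d) = 1 :=
  Ring.mul_inverse_cancel _ (unit_one_sub_Q d)

lemma nn_inv (d : ℕ) : NN (Ring.inverse (1 - Q d)) := by
  set I := Ring.inverse (1 - Q d) with hI
  have hrec : ∀ e : Fin 2 →₀ ℕ, coeff e I =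
      coeff e (1 : MvPowerSeries (Fin 2) ℤ) +
        ∑ p ∈ Finset.HasAntidiagonal.antidiagonal e, coeff p.1 (Q d) * coeff p.2 I := by
    intro e
    have h2 : I = 1 + Q d * I := by linear_combination one_sub_Q_mul_inv d
    conv_lhs => rw [h2]
    rw [map_add, coeff_mul]
  suffices h : ∀ n (e : Fin 2 →₀ ℕ), e 0 ≤ n → 0 ≤ coeff e I by
    intro e; exact h (e 0) e le_rfl
  intro n
  induction n using Nat.strong_induction_on with
  | _ n ih =>
    intro e he
    rw [hrec e]
    have h1 : (0 : ℤ) ≤ coeff e (1 : MvPowerSeries (Fin 2) ℤ) := nn_one e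
    refine add_nonneg h1 (Finset.sum_nonneg fun p hp => ?_)
    by_cases hq : coeff p.1 (Q d) = 0
    · rw [hq, zero_mul]
    · have hge : 1 ≤ p.1 0 := by
        rw [coeff_Q] at hq
        by_contra hc
        simp [hc] at hq
      have hsum : p.1 + p.2 = e := Finset.HasAntidiagonal.mem_antidiagonal.mp hp
      have hlt : p.2 0 < n := by
        have : p.1 0 + p.2 0 = e 0 := by rw [← hsum]; simp
        omega
      exact mul_nonneg (nn_Q d p.1) (ih (p.2 0) hlt p.2 le_rfl)

lemma nn_H (d : ℕ) : NN (H d) := nn_mul (nn_P d) (nn_inv d)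

lemma coeff_XX (e : Fin 2 →₀ ℕ) :
    coeff e (X 0 * X 1 : MvPowerSeries (Fin 2) ℤ) =
      if e = Finsupp.single 0 1 + Finsupp.single 1 1 then 1 else 0 := by
  rw [MvPowerSeries.X, MvPowerSeries.X, monomial_mul_monomial, coeff_monomial]
  norm_num

lemma nn_Q_sub_XX (d : ℕ) (hd : 2 ≤ d) : NN (Q d - X 0 * X 1) := by
  intro e
  rw [map_sub, coeff_Q, coeff_XX]
  by_cases he : e = Finsupp.single 0 1 + Finsupp.single 1 1
  · have h0 : e 0 = 1 := by subst he; simp [Finsupp.single_apply]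
    have h1 : e 1 = 1 := by subst he; simp [Finsupp.single_apply]
    rw [if_pos he, if_pos (by omega), h0, h1]
    have h2 : 1 ≤ d.choose (1 + 1) := Nat.choose_pos (by omega)
    have h3 : (1 : ℤ) ≤ (d.choose (1 + 1) : ℤ) := by exact_mod_cast h2
    linarith
  · rw [if_neg he, sub_zero]
    split <;> positivity

lemma P_one : P 1 = 0 := by
  ext e
  rw [coeff_P]
  simp

lemma nn_one_sub_XX_mul_H (d : ℕ) (hd : 1 ≤ d) : NN ((1 - X 0 * X 1) * H d) := by
  rcases Nat.lt_or_ge d 2 with h2 | h2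
  · have hd1 : d = 1 := by omega
    subst hd1
    have : H 1 = 0 := by rw [H, P_one, zero_mul]
    rw [this, mul_zero]
    intro e; simp
  · have key : (1 - X 0 * X 1) * H d = P d + (Q d - X 0 * X 1) * H d := by
      rw [H]
      linear_combination (P d) * one_sub_Q_mul_inv d
    rw [key]
    exact nn_add (nn_P d) (nn_mul (nn_Q_sub_XX d h2) (nn_H d))

/-- Lemma 2.1: for `𝐝 = (d₁,…,d_c)` with `c ≥ 1` and each `dᵢ ≥ 1`, the series
`(1 - yz)·H(𝐝)` has nonnegative coefficients, i.e. `h^{p+1,q+1}(𝐝) ≥ h^{p,q}(𝐝)`. -/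
theorem stmt7 (c : ℕ) (hc : 1 ≤ c) (ds : Fin c → ℕ) (hds : ∀ i, 1 ≤ ds i) :
    ∀ e : Fin 2 →₀ ℕ, 0 ≤ coeff e ((1 - X 0 * X 1) * Hmulti ds) := by
  suffices h : NN ((1 - X 0 * X 1) * Hmulti ds) from h
  rw [Hmulti, Finset.mul_sum]
  refine nn_sum fun S hS => ?_
  have hne : S ≠ ∅ := (Finset.mem_erase.mp hS).1
  obtain ⟨i₀, hi₀⟩ := Finset.nonempty_of_ne_empty hne
  have hprod : ∏ i ∈ S, H (ds i) = H (ds i₀) * ∏ i ∈ S.erase i₀, H (ds i) :=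
    (Finset.mul_prod_erase S _ hi₀).symm
  have key : (1 - X 0 * X 1) * (((1 + X 0) * (1 + X 1)) ^ (S.card - 1) * ∏ i ∈ S, H (ds i))
      = ((1 + X 0) * (1 + X 1)) ^ (S.card - 1) *
        (((1 - X 0 * X 1) * H (ds i₀)) * ∏ i ∈ S.erase i₀, H (ds i)) := by
    rw [hprod]; ring
  rw [key]
  exact nn_mul (nn_pow (nn_mul (nn_add nn_one (nn_X 0)) (nn_add nn_one (nn_X 1))) _)
    (nn_mul (nn_one_sub_XX_mul_H (ds i₀) (hds i₀)) (nn_prod fun i _ => nn_H (ds i)))
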